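/- Let k ≥ 1 and consider the grid graph G that is the dual of the plus-shaped polyomino consisting of a (2k+1)×(2k+1) L1-diamond arrangement realizing the lower-bound construction: there exist a grid graph G and three vertices g₁, g₂, g₃ such that the family of balls of radius k around g₁, g₂, g₃ shatters {g₁,g₂,g₃}, i.e., for every subset S ⊆ {1,2,3} there is a vertex v of G with d(v,gᵢ) ≤ k exactly for i ∈ S. -/

import Mathlib

set_option linter.unreachableTactic false
set_option linter.unusedTactic false
set_option maxHeartbeats 1000000



/-- The infinite grid graph on `ℤ²`. -/
def gridGraph : SimpleGraph (ℤ × ℤ) where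
  Adj a b := |a.1 - b.1| + |a.2 - b.2| = 1
  symm := by
    constructor
    intro a b h
    rw [abs_sub_comm b.1 a.1, abs_sub_comm b.2 a.2]
    exact h
  loopless := by constructor; intro a; simp

/-- Lower bound for the VC dimension of `k`-hop visibility in simple polyominoes:
for every `k ≥ 1` there is a (connected, finite) grid graph with three distinct
vertices `g₁, g₂, g₃` that are shattered by the radius-`k` balls: for every subset
`S ⊆ {1,2,3}` there is a vertex `v` with `d(v, gᵢ) ≤ k` exactly for `i ∈ S`. -/
lemma walk_l1 {V : Set (ℤ × ℤ)} {u v : ↥V} (p : (gridGraph.induce V).Walk u v) :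
    |(u:ℤ×ℤ).1 - (v:ℤ×ℤ).1| + |(u:ℤ×ℤ).2 - (v:ℤ×ℤ).2| ≤ (p.length : ℤ) := by
  induction p with
  | nil => simp
  | @cons a b c h q ih =>
    have h' : |(a:ℤ×ℤ).1 - (b:ℤ×ℤ).1| + |(a:ℤ×ℤ).2 - (b:ℤ×ℤ).2| = 1 := h
    have t1 := abs_sub_le (a:ℤ×ℤ).1 (b:ℤ×ℤ).1 (c:ℤ×ℤ).1
    have t2 := abs_sub_le (a:ℤ×ℤ).2 (b:ℤ×ℤ).2 (c:ℤ×ℤ).2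
    simp only [SimpleGraph.Walk.length_cons]
    push_cast
    linarith

lemma abs_lower (a b n : ℤ)
    (h : n < a + b ∨ n < -a + b ∨ n < a - b ∨ n < -a - b) : n < |a| + |b| := by
  have h1 := le_abs_self a
  have h2 := neg_abs_le a
  have h3 := le_abs_self b
  have h4 := neg_abs_le b
  rcases h with h | h | h | h <;> linarith

lemma not_edist_le {V : Set (ℤ × ℤ)} {u v : ↥V} (n : ℕ)
    (h : (n:ℤ) < |(u:ℤ×ℤ).1 - (v:ℤ×ℤ).1| + |(u:ℤ×ℤ).2 - (v:ℤ×ℤ).2|) :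
    ¬ (gridGraph.induce V).edist u v ≤ n := by
  intro hle
  have hne : (gridGraph.induce V).edist u v ≠ ⊤ := by
    intro ht
    rw [ht] at hle
    exact absurd hle (by simp)
  obtain ⟨p, hp⟩ := SimpleGraph.exists_walk_of_edist_ne_top hne
  have hlen : (p.length : ℕ) ≤ n := by
    have : (p.length : ℕ∞) ≤ (n : ℕ∞) := by rw [hp]; exact hle
    exact_mod_cast this
  have := walk_l1 p
  have : (n:ℤ) ≥ |(u:ℤ×ℤ).1 - (v:ℤ×ℤ).1| + |(u:ℤ×ℤ).2 - (v:ℤ×ℤ).2| := by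
    calc |(u:ℤ×ℤ).1 - (v:ℤ×ℤ).1| + |(u:ℤ×ℤ).2 - (v:ℤ×ℤ).2| ≤ (p.length : ℤ) := walk_l1 p
      _ ≤ (n:ℤ) := by exact_mod_cast hlen
  omega

lemma edist_le_horiz {V : Set (ℤ × ℤ)} (x y : ℤ) (n : ℕ)
    (h : ∀ t : ℕ, t ≤ n → ((x + (t:ℤ), y)) ∈ V) {u v : ↥V}
    (hu : (u:ℤ×ℤ) = (x, y)) (hv : (v:ℤ×ℤ) = (x + (n:ℤ), y)) :
    (gridGraph.induce V).edist u v ≤ n := by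
  induction n generalizing v with
  | zero =>
    have : u = v := Subtype.ext (by rw [hu, hv]; simp)
    rw [this, SimpleGraph.edist_self]; simp
  | succ m ih =>
    set w : ↥V := ⟨(x + (m:ℤ), y), h m (by omega)⟩ with hw
    have h1 : (gridGraph.induce V).edist u w ≤ m := ih (fun t ht => h t (by omega)) rfl
    have hadj : (gridGraph.induce V).Adj w v := by
      show gridGraph.Adj ((w:ℤ×ℤ)) ((v:ℤ×ℤ))
      rw [hv]
      show |(x + (m:ℤ)) - (x + ((m+1:ℕ):ℤ))| + |y - y| = 1
      push_cast; ring_nf; simp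
    have h2 : (gridGraph.induce V).edist w v ≤ 1 :=
      le_of_eq (SimpleGraph.edist_eq_one_iff_adj.mpr hadj)
    calc (gridGraph.induce V).edist u v ≤ _ + _ := SimpleGraph.edist_triangle
      _ ≤ (m : ℕ∞) + 1 := add_le_add h1 h2
      _ = ((m+1 : ℕ) : ℕ∞) := by push_cast; ring

lemma edist_le_vert {V : Set (ℤ × ℤ)} (x y : ℤ) (n : ℕ)
    (h : ∀ t : ℕ, t ≤ n → ((x, y + (t:ℤ))) ∈ V) {u v : ↥V}
    (hu : (u:ℤ×ℤ) = (x, y)) (hv : (v:ℤ×ℤ) = (x, y + (n:ℤ))) :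
    (gridGraph.induce V).edist u v ≤ n := by
  induction n generalizing v with
  | zero =>
    have : u = v := Subtype.ext (by rw [hu, hv]; simp)
    rw [this, SimpleGraph.edist_self]; simp
  | succ m ih =>
    set w : ↥V := ⟨(x, y + (m:ℤ)), h m (by omega)⟩ with hw
    have h1 : (gridGraph.induce V).edist u w ≤ m := ih (fun t ht => h t (by omega)) rfl
    have hadj : (gridGraph.induce V).Adj w v := by
      show gridGraph.Adj ((w:ℤ×ℤ)) ((v:ℤ×ℤ))
      rw [hv]
      show |x - x| + |(y + (m:ℤ)) - (y + ((m+1:ℕ):ℤ))| = 1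
      push_cast; ring_nf; simp
    have h2 : (gridGraph.induce V).edist w v ≤ 1 :=
      le_of_eq (SimpleGraph.edist_eq_one_iff_adj.mpr hadj)
    calc (gridGraph.induce V).edist u v ≤ _ + _ := SimpleGraph.edist_triangle
      _ ≤ (m : ℕ∞) + 1 := add_le_add h1 h2
      _ = ((m+1 : ℕ) : ℕ∞) := by push_cast; ring

lemma reach_of_edist_le {V : Set (ℤ × ℤ)} {u v : ↥V} {n : ℕ}
    (h : (gridGraph.induce V).edist u v ≤ n) : (gridGraph.induce V).Reachable u v :=
  SimpleGraph.reachable_of_edist_ne_top (h.trans_lt (ENat.coe_lt_top n)).ne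

lemma finmk0 (h : 0 < 3) : (⟨0, h⟩ : Fin 3) = 0 := rfl
lemma finmk1 (h : 1 < 3) : (⟨1, h⟩ : Fin 3) = 1 := rfl
lemma finmk2 (h : 2 < 3) : (⟨2, h⟩ : Fin 3) = 2 := rfl

theorem vc_lower_bound_simple (k : ℕ) (hk : 1 ≤ k) :
    ∃ (V : Set (ℤ × ℤ)), V.Finite ∧ (gridGraph.induce V).Connected ∧
      ∃ g : Fin 3 → V, Function.Injective g ∧
        ∀ S : Set (Fin 3), ∃ v : V,
          ∀ i : Fin 3, ((gridGraph.induce V).edist v (g i) ≤ k ↔ i ∈ S) := by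
  set V : Set (ℤ × ℤ) := {p : ℤ × ℤ |
      (p.2 = 0 ∧ 0 ≤ p.1 ∧ p.1 ≤ 2*((k:ℤ))+1) ∨ (p.2 = ((k:ℤ)) ∧ 0 ≤ p.1 ∧ p.1 ≤ ((k:ℤ))) ∨
      (p.1 = 0 ∧ -1 ≤ p.2 ∧ p.2 ≤ ((k:ℤ))) ∨ (p.1 = ((k:ℤ)) ∧ 0 ≤ p.2 ∧ p.2 ≤ ((k:ℤ))+1)} with hVdef
  have memV : ∀ p : ℤ × ℤ,
      ((p.2 = 0 ∧ 0 ≤ p.1 ∧ p.1 ≤ 2*((k:ℤ))+1) ∨ (p.2 = ((k:ℤ)) ∧ 0 ≤ p.1 ∧ p.1 ≤ ((k:ℤ))) ∨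
      (p.1 = 0 ∧ -1 ≤ p.2 ∧ p.2 ≤ ((k:ℤ))) ∨ (p.1 = ((k:ℤ)) ∧ 0 ≤ p.2 ∧ p.2 ≤ ((k:ℤ))+1)) → p ∈ V :=
    fun p h => h
  have m00 : ((0:ℤ), (0:ℤ)) ∈ V := memV _ (by first | (simp; omega) | simp | omega)
  have mK0 : ((((k:ℤ)), (0:ℤ))) ∈ V := memV _ (by first | (simp; omega) | simp | omega)
  have mKK : ((((k:ℤ)), ((k:ℤ)))) ∈ V := memV _ (by first | (simp; omega) | simp | omega)
  have m0K : (((0:ℤ), ((k:ℤ)))) ∈ V := memV _ (by first | (simp; omega) | simp | omega)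
  have m0m1 : (((0:ℤ), (-1:ℤ))) ∈ V := memV _ (by first | (simp; omega) | simp | omega)
  have mK1 : ((((k:ℤ))+1, (0:ℤ))) ∈ V := memV _ (by first | (simp; omega) | simp | omega)
  have mKk1 : ((((k:ℤ)), ((k:ℤ))+1)) ∈ V := memV _ (by first | (simp; omega) | simp | omega)
  have mtip : ((2*((k:ℤ))+1, (0:ℤ))) ∈ V := memV _ (by first | (simp; omega) | simp | omega)
  refine ⟨V, ?_, ?_, ?_⟩
  · -- finiteness
    apply Set.Finite.subset ((Set.finite_Icc (-1:ℤ) (2*((k:ℤ))+1)).prod (Set.finite_Icc (-1:ℤ) (((k:ℤ))+1)))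
    rintro ⟨a, b⟩ h
    simp only [hVdef, Set.mem_setOf_eq] at h
    simp only [Set.mem_prod, Set.mem_Icc]
    omega
  · -- connectivity
    have hreach : ∀ v : ↥V, (gridGraph.induce V).Reachable v ⟨((0:ℤ),(0:ℤ)), m00⟩ := by
      rintro ⟨⟨a, b⟩, hv⟩
      have hv' : (b = 0 ∧ 0 ≤ a ∧ a ≤ 2*((k:ℤ))+1) ∨ (b = ((k:ℤ)) ∧ 0 ≤ a ∧ a ≤ ((k:ℤ))) ∨
          (a = 0 ∧ -1 ≤ b ∧ b ≤ ((k:ℤ))) ∨ (a = ((k:ℤ)) ∧ 0 ≤ b ∧ b ≤ ((k:ℤ))+1) := hv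
      rcases hv' with ⟨hb, ha0, ha1⟩ | ⟨hb, ha0, ha1⟩ | ⟨ha, hb0, hb1⟩ | ⟨ha, hb0, hb1⟩
      · exact (reach_of_edist_le (edist_le_horiz 0 0 a.toNat
          (fun t ht => memV _ (by first | (simp; omega) | simp | omega)) rfl
          (by simp [Prod.ext_iff]; omega))).symm
      · have r1 : (gridGraph.induce V).Reachable ⟨((0:ℤ), ((k:ℤ))), m0K⟩ ⟨(a,b), hv⟩ :=
          reach_of_edist_le (edist_le_horiz 0 ((k:ℤ)) a.toNat
            (fun t ht => memV _ (by first | (simp; omega) | simp | omega)) rfl (by simp [Prod.ext_iff]; omega))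
        have r2 : (gridGraph.induce V).Reachable ⟨((0:ℤ),(0:ℤ)), m00⟩ ⟨((0:ℤ), ((k:ℤ))), m0K⟩ :=
          reach_of_edist_le (edist_le_vert 0 0 k
            (fun t ht => memV _ (by first | (simp; omega) | simp | omega)) rfl (by simp [Prod.ext_iff]))
        exact r1.symm.trans r2.symm
      · have r1 : (gridGraph.induce V).Reachable ⟨((0:ℤ), (-1:ℤ)), m0m1⟩ ⟨(a,b), hv⟩ :=
          reach_of_edist_le (edist_le_vert 0 (-1) (b+1).toNat
            (fun t ht => memV _ (by first | (simp; omega) | simp | omega)) rfl (by simp [Prod.ext_iff]; omega))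
        have r2 : (gridGraph.induce V).Reachable ⟨((0:ℤ), (-1:ℤ)), m0m1⟩ ⟨((0:ℤ),(0:ℤ)), m00⟩ :=
          reach_of_edist_le (edist_le_vert 0 (-1) 1
            (fun t ht => memV _ (by first | (simp; omega) | simp | omega)) rfl (by simp [Prod.ext_iff]))
        exact r1.symm.trans r2
      · have r1 : (gridGraph.induce V).Reachable ⟨(((k:ℤ)), (0:ℤ)), mK0⟩ ⟨(a,b), hv⟩ :=
          reach_of_edist_le (edist_le_vert ((k:ℤ)) 0 b.toNat
            (fun t ht => memV _ (by first | (simp; omega) | simp | omega)) rfl (by simp [Prod.ext_iff]; omega))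
        have r2 : (gridGraph.induce V).Reachable ⟨((0:ℤ),(0:ℤ)), m00⟩ ⟨(((k:ℤ)), (0:ℤ)), mK0⟩ :=
          reach_of_edist_le (edist_le_horiz 0 0 k
            (fun t ht => memV _ (by first | (simp; omega) | simp | omega)) rfl (by simp [Prod.ext_iff]))
        exact r1.symm.trans r2.symm
    haveI : Nonempty ↥V := ⟨⟨((0:ℤ),(0:ℤ)), m00⟩⟩
    exact SimpleGraph.Connected.mk (fun u v => (hreach u).trans (hreach v).symm)
  · -- shattering
    refine ⟨![⟨((0:ℤ),(0:ℤ)), m00⟩, ⟨(((k:ℤ)), (0:ℤ)), mK0⟩, ⟨(((k:ℤ)), ((k:ℤ))), mKK⟩], ?_, ?_⟩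
    · intro i j hij
      fin_cases i <;> fin_cases j <;>
        first
        | rfl
        | (exfalso
           simp only [finmk0, finmk1, finmk2, Matrix.cons_val_zero, Matrix.cons_val_one, Matrix.head_cons,
             Matrix.cons_val_two, Matrix.tail_cons, Subtype.mk.injEq, Prod.mk.injEq] at hij
           omega)
    · intro S
      -- upper bound facts
      have U1 : (gridGraph.induce V).edist ⟨((0:ℤ),(0:ℤ)), m00⟩ ⟨(((k:ℤ)),(0:ℤ)), mK0⟩ ≤ k :=
        edist_le_horiz 0 0 k (fun t ht => memV _ (by first | (simp; omega) | simp | omega)) rfl (by simp [Prod.ext_iff])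
      have U2 : (gridGraph.induce V).edist ⟨(((k:ℤ)),(0:ℤ)), mK0⟩ ⟨(((k:ℤ)),((k:ℤ))), mKK⟩ ≤ k :=
        edist_le_vert ((k:ℤ)) 0 k (fun t ht => memV _ (by first | (simp; omega) | simp | omega)) rfl (by simp [Prod.ext_iff])
      have U3 : (gridGraph.induce V).edist ⟨((0:ℤ),(0:ℤ)), m00⟩ ⟨((0:ℤ),((k:ℤ))), m0K⟩ ≤ k :=
        edist_le_vert 0 0 k (fun t ht => memV _ (by first | (simp; omega) | simp | omega)) rfl (by simp [Prod.ext_iff])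
      have U4 : (gridGraph.induce V).edist ⟨((0:ℤ),((k:ℤ))), m0K⟩ ⟨(((k:ℤ)),((k:ℤ))), mKK⟩ ≤ k :=
        edist_le_horiz 0 ((k:ℤ)) k (fun t ht => memV _ (by first | (simp; omega) | simp | omega)) rfl (by simp [Prod.ext_iff])
      have hone : (1 : ℕ∞) ≤ (k : ℕ∞) := by exact_mod_cast hk
      have U5 : (gridGraph.induce V).edist ⟨((0:ℤ),(-1:ℤ)), m0m1⟩ ⟨((0:ℤ),(0:ℤ)), m00⟩ ≤ k :=
        le_trans (edist_le_vert 0 (-1) 1 (fun t ht => memV _ (by first | (simp; omega) | simp | omega)) rfl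
          (by simp [Prod.ext_iff])) hone
      have U6 : (gridGraph.induce V).edist ⟨(((k:ℤ)),(0:ℤ)), mK0⟩ ⟨(((k:ℤ))+1,(0:ℤ)), mK1⟩ ≤ k :=
        le_trans (edist_le_horiz ((k:ℤ)) 0 1 (fun t ht => memV _ (by first | (simp; omega) | simp | omega)) rfl
          (by simp [Prod.ext_iff])) hone
      have U7 : (gridGraph.induce V).edist ⟨(((k:ℤ)),((k:ℤ))), mKK⟩ ⟨(((k:ℤ)),((k:ℤ))+1), mKk1⟩ ≤ k :=
        le_trans (edist_le_vert ((k:ℤ)) ((k:ℤ)) 1 (fun t ht => memV _ (by first | (simp; omega) | simp | omega)) rfl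
          (by simp [Prod.ext_iff])) hone
      by_cases h0 : (0 : Fin 3) ∈ S <;> by_cases h1 : (1 : Fin 3) ∈ S <;>
        by_cases h2 : (2 : Fin 3) ∈ S
      · -- {0,1,2} : v = (((k:ℤ)),0)
        refine ⟨⟨(((k:ℤ)),(0:ℤ)), mK0⟩, ?_⟩
        intro i
        fin_cases i <;>
          simp only [finmk0, finmk1, finmk2, Matrix.cons_val_zero, Matrix.cons_val_one, Matrix.head_cons,
            Matrix.cons_val_two, Matrix.tail_cons]
        · exact iff_of_true (by rw [SimpleGraph.edist_comm]; exact U1) h0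
        · exact iff_of_true (by rw [SimpleGraph.edist_self]; simp) h1
        · exact iff_of_true U2 h2
      · -- {0,1} : v = (0,0)
        refine ⟨⟨((0:ℤ),(0:ℤ)), m00⟩, ?_⟩
        intro i
        fin_cases i <;>
          simp only [finmk0, finmk1, finmk2, Matrix.cons_val_zero, Matrix.cons_val_one, Matrix.head_cons,
            Matrix.cons_val_two, Matrix.tail_cons]
        · exact iff_of_true (by rw [SimpleGraph.edist_self]; simp) h0
        · exact iff_of_true U1 h1
        · exact iff_of_false (not_edist_le k (abs_lower _ _ _ (by first | (simp; omega) | simp | omega))) h2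
      · -- {0,2} : v = (0,((k:ℤ)))
        refine ⟨⟨((0:ℤ),((k:ℤ))), m0K⟩, ?_⟩
        intro i
        fin_cases i <;>
          simp only [finmk0, finmk1, finmk2, Matrix.cons_val_zero, Matrix.cons_val_one, Matrix.head_cons,
            Matrix.cons_val_two, Matrix.tail_cons]
        · exact iff_of_true (by rw [SimpleGraph.edist_comm]; exact U3) h0
        · exact iff_of_false (not_edist_le k (abs_lower _ _ _ (by first | (simp; omega) | simp | omega))) h1
        · exact iff_of_true U4 h2
      · -- {0} : v = (0,-1)
        refine ⟨⟨((0:ℤ),(-1:ℤ)), m0m1⟩, ?_⟩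
        intro i
        fin_cases i <;>
          simp only [finmk0, finmk1, finmk2, Matrix.cons_val_zero, Matrix.cons_val_one, Matrix.head_cons,
            Matrix.cons_val_two, Matrix.tail_cons]
        · exact iff_of_true U5 h0
        · exact iff_of_false (not_edist_le k (abs_lower _ _ _ (by first | (simp; omega) | simp | omega))) h1
        · exact iff_of_false (not_edist_le k (abs_lower _ _ _ (by first | (simp; omega) | simp | omega))) h2
      · -- {1,2} : v = (((k:ℤ)),((k:ℤ)))
        refine ⟨⟨(((k:ℤ)),((k:ℤ))), mKK⟩, ?_⟩
        intro i
        fin_cases i <;>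
          simp only [finmk0, finmk1, finmk2, Matrix.cons_val_zero, Matrix.cons_val_one, Matrix.head_cons,
            Matrix.cons_val_two, Matrix.tail_cons]
        · exact iff_of_false (not_edist_le k (abs_lower _ _ _ (by first | (simp; omega) | simp | omega))) h0
        · exact iff_of_true (by rw [SimpleGraph.edist_comm]; exact U2) h1
        · exact iff_of_true (by rw [SimpleGraph.edist_self]; simp) h2
      · -- {1} : v = (((k:ℤ))+1,0)
        refine ⟨⟨(((k:ℤ))+1,(0:ℤ)), mK1⟩, ?_⟩
        intro i
        fin_cases i <;>
          simp only [finmk0, finmk1, finmk2, Matrix.cons_val_zero, Matrix.cons_val_one, Matrix.head_cons,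
            Matrix.cons_val_two, Matrix.tail_cons]
        · exact iff_of_false (not_edist_le k (abs_lower _ _ _ (by first | (simp; omega) | simp | omega))) h0
        · exact iff_of_true (by rw [SimpleGraph.edist_comm]; exact U6) h1
        · exact iff_of_false (not_edist_le k (abs_lower _ _ _ (by first | (simp; omega) | simp | omega))) h2
      · -- {2} : v = (((k:ℤ)),((k:ℤ))+1)
        refine ⟨⟨(((k:ℤ)),((k:ℤ))+1), mKk1⟩, ?_⟩
        intro i
        fin_cases i <;>
          simp only [finmk0, finmk1, finmk2, Matrix.cons_val_zero, Matrix.cons_val_one, Matrix.head_cons,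
            Matrix.cons_val_two, Matrix.tail_cons]
        · exact iff_of_false (not_edist_le k (abs_lower _ _ _ (by first | (simp; omega) | simp | omega))) h0
        · exact iff_of_false (not_edist_le k (abs_lower _ _ _ (by first | (simp; omega) | simp | omega))) h1
        · exact iff_of_true (by rw [SimpleGraph.edist_comm]; exact U7) h2
      · -- {} : v = (2K+1,0)
        refine ⟨⟨(2*((k:ℤ))+1,(0:ℤ)), mtip⟩, ?_⟩
        intro i
        fin_cases i <;>
          simp only [finmk0, finmk1, finmk2, Matrix.cons_val_zero, Matrix.cons_val_one, Matrix.head_cons,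
            Matrix.cons_val_two, Matrix.tail_cons]
        · exact iff_of_false (not_edist_le k (abs_lower _ _ _ (by first | (simp; omega) | simp | omega))) h0
        · exact iff_of_false (not_edist_le k (abs_lower _ _ _ (by first | (simp; omega) | simp | omega))) h1
        · exact iff_of_false (not_edist_le k (abs_lower _ _ _ (by first | (simp; omega) | simp | omega))) h2
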